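/- Let W_{1...k} be the q-antisymmetrizer on (ℂ^N)^{⊗k} built from Λ^{ab}_{cd}=q(a,b)δ^a_d δ^b_c via the recursion W_{1...k} = 𝓘_{1...k} W_{1...k−1}, 𝓘_{1...k} = I − 𝓘_{1...k−1}Λ_{k−1,k} (with W on one factor = I, 𝓘 on one factor = I). Then W satisfies the idempotency-type relation W_{1...k} W_{1...k} = k! · W_{1...k}. -/

import Mathlib

/-- `Λ` acting at positions `t, t+1` of `(ℂ^N)^{⊗k}` (identity if `t+1 ≥ k`):
built from `Λ^{ab}_{cd} = q(a,b) δ^a_d δ^b_c`, it maps `e_g` to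
`q(g t, g (t+1)) e_{g ∘ swap(t,t+1)}`. -/
def lamPos {N : ℕ} (q : Fin N → Fin N → ℂ) (k t : ℕ) :
    Matrix (Fin k → Fin N) (Fin k → Fin N) ℂ :=
  if h : t + 1 < k then
    fun f g =>
      if g = f ∘ (Equiv.swap (⟨t, Nat.lt_of_succ_lt h⟩ : Fin k) ⟨t + 1, h⟩)
      then q (f ⟨t, Nat.lt_of_succ_lt h⟩) (f ⟨t + 1, h⟩) else 0
  else 1

/-- The operators `𝓘_{1...m}` of the q-antisymmetrizer recursion:
`𝓘_{1} = I`, `𝓘_{1...m} = I − 𝓘_{1...m−1} Λ_{m−1,m}`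
(in 0-based positions `Λ_{m−1,m} = lamPos q k (m−2)`), realized as matrices on
`(ℂ^N)^{⊗k}`. -/
noncomputable def Ical {N : ℕ} (q : Fin N → Fin N → ℂ) (k : ℕ) :
    ℕ → Matrix (Fin k → Fin N) (Fin k → Fin N) ℂ
  | 0 => 1
  | 1 => 1
  | (m + 2) => 1 - Ical q k (m + 1) * lamPos q k m

/-- The q-antisymmetrizer `W_{1...m}` defined by the recursion
`W_{1...m} = 𝓘_{1...m} W_{1...m−1}`, `W_1 = I`. -/
noncomputable def Wmat {N : ℕ} (q : Fin N → Fin N → ℂ) (k : ℕ) :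
    ℕ → Matrix (Fin k → Fin N) (Fin k → Fin N) ℂ
  | 0 => 1
  | (m + 1) => Ical q k (m + 1) * Wmat q k m


namespace WP

variable {N : ℕ}

/-- the set of pairs `i < j` -/
def pairs (k : ℕ) : Finset (Fin k × Fin k) :=
  Finset.univ.filter (fun p : Fin k × Fin k => p.1 < p.2)

/-- the cocycle -/
def C (q : Fin N → Fin N → ℂ) {k : ℕ} (f : Fin k → Fin N) (σ : Equiv.Perm (Fin k)) : ℂ :=
  ∏ p ∈ pairs k, (if σ p.2 < σ p.1 then q (f (σ p.2)) (f (σ p.1)) else 1)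

/-- the matrix representation of a permutation -/
def T (q : Fin N → Fin N → ℂ) {k : ℕ} (σ : Equiv.Perm (Fin k)) :
    Matrix (Fin k → Fin N) (Fin k → Fin N) ℂ :=
  fun f g => if g = f ∘ σ then C q f σ else 0

/-- sorted image of a pair under a permutation -/
def r {k : ℕ} (τ : Equiv.Perm (Fin k)) (p : Fin k × Fin k) : Fin k × Fin k :=
  if τ p.1 < τ p.2 then (τ p.1, τ p.2) else (τ p.2, τ p.1)

lemma r_mem {k : ℕ} (τ : Equiv.Perm (Fin k)) {p : Fin k × Fin k} (hp : p ∈ pairs k) :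
    r τ p ∈ pairs k := by
  simp only [pairs, Finset.mem_filter, Finset.mem_univ, true_and] at hp ⊢
  unfold r
  split_ifs with h
  · exact h
  · rcases lt_or_eq_of_le (not_lt.mp h) with h' | h'
    · exact h'
    · exact absurd (τ.injective h') (ne_of_gt hp)

lemma r_inv {k : ℕ} (τ : Equiv.Perm (Fin k)) {p : Fin k × Fin k} (hp : p ∈ pairs k) :
    r τ⁻¹ (r τ p) = p := by
  simp only [pairs, Finset.mem_filter, Finset.mem_univ, true_and] at hp
  unfold r
  split_ifs with h h1 h2 <;>
    simp_all [Equiv.Perm.inv_def, Equiv.symm_apply_apply] <;> first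
      | (exact absurd hp (by omega))
      | (exact absurd hp (not_lt.mpr (le_of_lt (by assumption))))

lemma C_one (q : Fin N → Fin N → ℂ) {k : ℕ} (f : Fin k → Fin N) : C q f 1 = 1 := by
  unfold C
  apply Finset.prod_eq_one
  intro p hp
  simp only [pairs, Finset.mem_filter, Finset.mem_univ, true_and] at hp
  simp [not_lt.mpr (le_of_lt hp), Equiv.Perm.one_apply, hp.not_gt]

lemma C_mul (q : Fin N → Fin N → ℂ) (h2 : ∀ a b, q a b * q b a = 1) {k : ℕ}
    (f : Fin k → Fin N) (σ τ : Equiv.Perm (Fin k)) :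
    C q f (σ * τ) = C q f σ * C q (f ∘ σ) τ := by
  have key : ∀ p ∈ pairs k, r τ (r τ⁻¹ p) = p := by
    intro p hp
    have := r_inv τ⁻¹ hp
    simpa using this
  have hre : C q f σ = ∏ p ∈ pairs k,
      (if σ (r τ p).2 < σ (r τ p).1 then q (f (σ (r τ p).2)) (f (σ (r τ p).1)) else 1) := by
    unfold C
    refine Finset.prod_nbij' (r τ⁻¹) (r τ) (fun p hp => r_mem _ hp) (fun p hp => r_mem _ hp)
      (fun p hp => key p hp) (fun p hp => r_inv τ hp) ?_
    intro p hp
    rw [key p hp]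
  rw [hre, C, C, ← Finset.prod_mul_distrib]
  apply Finset.prod_congr rfl
  intro p hp
  simp only [pairs, Finset.mem_filter, Finset.mem_univ, true_and] at hp
  have hne : τ p.1 ≠ τ p.2 := fun h => absurd (τ.injective h) (ne_of_lt hp)
  have hne2 : σ (τ p.1) ≠ σ (τ p.2) := fun h => hne (σ.injective h)
  simp only [Equiv.Perm.mul_apply, Function.comp_apply, r]
  by_cases ht : τ p.1 < τ p.2
  · simp only [if_pos ht, if_neg (not_lt.mpr (le_of_lt ht)), mul_one]
    rfl
  · simp only [if_neg ht, if_pos (lt_of_le_of_ne (not_lt.mp ht) hne.symm)]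
    rcases lt_or_gt_of_ne hne2 with hs | hs
    · simp only [not_lt.mpr (le_of_lt hs), hs, if_true, if_false]
      exact (h2 _ _).symm
    · simp only [hs, if_true, not_lt.mpr (le_of_lt hs), if_false, one_mul]

lemma T_one (q : Fin N → Fin N → ℂ) {k : ℕ} : T q (1 : Equiv.Perm (Fin k)) = 1 := by
  funext f g
  simp only [T, C_one, Matrix.one_apply]
  have : (f ∘ ⇑(1 : Equiv.Perm (Fin k))) = f := rfl
  rw [this]
  by_cases h : f = g <;> simp [h, eq_comm]

lemma T_mul (q : Fin N → Fin N → ℂ) (h2 : ∀ a b, q a b * q b a = 1) {k : ℕ}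
    (σ τ : Equiv.Perm (Fin k)) : T q σ * T q τ = T q (σ * τ) := by
  funext f g
  rw [Matrix.mul_apply]
  rw [Finset.sum_eq_single (f ∘ ⇑σ)]
  · simp only [T, if_true]
    have hco : (f ∘ ⇑σ) ∘ ⇑τ = f ∘ ⇑(σ * τ) := by
      funext x; simp [Equiv.Perm.mul_apply]
    rw [hco]
    by_cases h : g = f ∘ ⇑(σ * τ)
    · rw [if_pos h, if_pos h, C_mul q h2]
    · rw [if_neg h, if_neg h, mul_zero]
  · intro h _ hne
    simp [T, if_neg hne]
  · simp


/-- adjacent transposition `t ↔ t+1` (identity if out of range) -/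
def sgen (k t : ℕ) : Equiv.Perm (Fin k) :=
  if h : t + 1 < k then Equiv.swap ⟨t, Nat.lt_of_succ_lt h⟩ ⟨t + 1, h⟩ else 1

lemma lamPos_eq (q : Fin N → Fin N → ℂ) (k t : ℕ) : lamPos q k t = T q (sgen k t) := by
  unfold lamPos sgen
  split_ifs with h
  · funext f g
    erw [dif_pos h]
    show _ = T q (Equiv.swap (⟨t, Nat.lt_of_succ_lt h⟩ : Fin k) ⟨t + 1, h⟩) f g
    unfold T
    by_cases hg : g = f ∘ ⇑(Equiv.swap (⟨t, Nat.lt_of_succ_lt h⟩ : Fin k) ⟨t + 1, h⟩)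
    · rw [if_pos hg, if_pos hg]
      have hC : C q f (Equiv.swap (⟨t, Nat.lt_of_succ_lt h⟩ : Fin k) ⟨t + 1, h⟩)
          = q (f ⟨t, Nat.lt_of_succ_lt h⟩) (f ⟨t + 1, h⟩) := by
        unfold C
        rw [Finset.prod_eq_single_of_mem ((⟨t, Nat.lt_of_succ_lt h⟩ : Fin k), (⟨t + 1, h⟩ : Fin k))]
        · rw [if_pos (by rw [Equiv.swap_apply_left, Equiv.swap_apply_right]; exact
            (by simp [Fin.lt_def] : (⟨t, Nat.lt_of_succ_lt h⟩ : Fin k) < ⟨t + 1, h⟩))]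
          rw [Equiv.swap_apply_left, Equiv.swap_apply_right]
        · simp only [pairs, Finset.mem_filter, Finset.mem_univ, true_and, Fin.lt_def]
          omega
        · intro p hp hne
          simp only [pairs, Finset.mem_filter, Finset.mem_univ, true_and] at hp
          have h1 : (p.1 : ℕ) ≠ t ∨ (p.2 : ℕ) ≠ t + 1 := by
            by_contra hc; push_neg at hc
            exact hne (Prod.ext (Fin.ext hc.1) (Fin.ext hc.2))
          rw [if_neg]
          have hp' : (p.1 : ℕ) < (p.2 : ℕ) := hp
          simp only [Equiv.swap_apply_def]
          split_ifs <;> (simp only [Fin.lt_def, Fin.ext_iff, Fin.val_mk, not_lt] at *) <;> omega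
      rw [hC]
    · rw [if_neg hg, if_neg hg]
  · rw [T_one]
    exact dif_neg h

/-- `cyc k j d = s_j s_{j+1} ⋯ s_{j+d-1}` -/
def cyc (k j : ℕ) : ℕ → Equiv.Perm (Fin k)
  | 0 => 1
  | (d + 1) => cyc k j d * sgen k (j + d)

lemma sgen_eq_swap {k t : ℕ} (h : t + 1 < k) :
    sgen k t = Equiv.swap ⟨t, Nat.lt_of_succ_lt h⟩ ⟨t + 1, h⟩ := by
  unfold sgen; rw [dif_pos h]

lemma cyc_apply_out {k j d : ℕ} (hk : j + d < k) (i : Fin k)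
    (hi : (i : ℕ) < j ∨ j + d < (i : ℕ)) : cyc k j d i = i := by
  induction d with
  | zero => rfl
  | succ d ih =>
    have hk' : j + d < k := by omega
    have hs : j + d + 1 < k := by omega
    show (cyc k j d) (sgen k (j + d) i) = i
    rw [sgen_eq_swap hs]
    rw [Equiv.swap_apply_of_ne_of_ne (by simp [Fin.ext_iff]; omega) (by simp [Fin.ext_iff]; omega)]
    exact ih hk' (by omega)

lemma cyc_apply_top {k j d : ℕ} (hk : j + d < k) :
    cyc k j d ⟨j + d, hk⟩ = ⟨j, by omega⟩ := by
  induction d with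
  | zero => rfl
  | succ d ih =>
    have hk' : j + d < k := by omega
    have hs : j + d + 1 < k := by omega
    show (cyc k j d) (sgen k (j + d) ⟨j + (d+1), hk⟩) = _
    rw [sgen_eq_swap hs]
    have : (⟨j + (d+1), hk⟩ : Fin k) = ⟨j + d + 1, hs⟩ := by simp [Fin.ext_iff]; omega
    rw [this, Equiv.swap_apply_right]
    exact ih hk'

lemma cyc_sign {k j d : ℕ} (hk : j + d < k) :
    Equiv.Perm.sign (cyc k j d) = (-1) ^ d := by
  induction d with
  | zero => simp [cyc]
  | succ d ih =>
    have hk' : j + d < k := by omega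
    have hs : j + d + 1 < k := by omega
    show Equiv.Perm.sign (cyc k j d * sgen k (j + d)) = _
    rw [map_mul, ih hk', sgen_eq_swap hs,
      Equiv.Perm.sign_swap (by simp [Fin.ext_iff])]
    rw [pow_succ]

/-- `cpm k m j = s_j s_{j+1} ⋯ s_{m-1}`, the cycle `(j j+1 … m) ↦ m→j, i→i+1`. -/
def cpm (k m j : ℕ) : Equiv.Perm (Fin k) := cyc k j (m - j)

lemma cpm_apply_out {k m j : ℕ} (hm : m < k) (hj : j ≤ m) (i : Fin k)
    (hi : m < (i : ℕ)) : cpm k m j i = i := by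
  unfold cpm
  exact cyc_apply_out (by omega) i (by omega)

lemma cpm_apply_top {k m j : ℕ} (hm : m < k) (hj : j ≤ m) :
    cpm k m j ⟨m, hm⟩ = ⟨j, by omega⟩ := by
  unfold cpm
  have h1 : (⟨m, hm⟩ : Fin k) = ⟨j + (m - j), by omega⟩ := by simp [Fin.ext_iff]; omega
  rw [h1, cyc_apply_top (by omega)]

lemma cpm_sign {k m j : ℕ} (hm : m < k) (hj : j ≤ m) :
    Equiv.Perm.sign (cpm k m j) = (-1) ^ (m - j) := by
  unfold cpm
  exact cyc_sign (by omega)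

lemma cpm_succ {k m j : ℕ} (hj : j ≤ m) :
    cpm k (m + 1) j = cpm k m j * sgen k m := by
  unfold cpm
  have h1 : m + 1 - j = (m - j) + 1 := by omega
  have h2 : j + (m - j) = m := by omega
  rw [h1]
  show cyc k j (m - j) * sgen k (j + (m - j)) = _
  rw [h2]

lemma Ical_eq (q : Fin N → Fin N → ℂ) (h2 : ∀ a b, q a b * q b a = 1) (k : ℕ) :
    ∀ m : ℕ, Ical q k (m + 1)
      = ∑ j ∈ Finset.range (m + 1), ((-1 : ℂ)) ^ (m - j) • T q (cpm k m j) := by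
  intro m
  induction m with
  | zero =>
    show (1 : Matrix _ _ ℂ) = _
    simp [cpm, cyc, T_one]
  | succ m ih =>
    show 1 - Ical q k (m + 1) * lamPos q k m = _
    rw [ih, lamPos_eq, Finset.sum_mul]
    have hstep : ∀ j ∈ Finset.range (m + 1),
        (((-1 : ℂ)) ^ (m - j) • T q (cpm k m j)) * T q (sgen k m)
          = -(((-1 : ℂ)) ^ (m + 1 - j) • T q (cpm k (m + 1) j)) := by
      intro j hj
      have hj' : j ≤ m := Nat.lt_succ_iff.mp (Finset.mem_range.mp hj)
      rw [smul_mul_assoc, T_mul q h2, ← cpm_succ hj']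
      have he : m + 1 - j = (m - j) + 1 := by omega
      rw [he, pow_succ, mul_neg_one, neg_smul, neg_neg]
    rw [Finset.sum_congr rfl hstep, Finset.sum_neg_distrib, sub_neg_eq_add]
    have htop : ((-1 : ℂ)) ^ (m + 1 - (m + 1)) • T q (cpm k (m + 1) (m + 1)) = 1 := by
      simp [cpm, cyc, T_one]
    conv_rhs => rw [Finset.sum_range_succ, htop]
    exact add_comm _ _

/-- permutations fixing all positions `≥ m` -/
def Fx (k m : ℕ) : Finset (Equiv.Perm (Fin k)) :=
  Finset.univ.filter (fun σ => ∀ i : Fin k, m ≤ (i : ℕ) → σ i = i)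

lemma mem_Fx {k m : ℕ} {σ : Equiv.Perm (Fin k)} :
    σ ∈ Fx k m ↔ ∀ i : Fin k, m ≤ (i : ℕ) → σ i = i := by
  simp [Fx]

/-- sign as a complex number -/
def eps {k : ℕ} (σ : Equiv.Perm (Fin k)) : ℂ := ((Equiv.Perm.sign σ : ℤ) : ℂ)

lemma eps_mul {k : ℕ} (σ τ : Equiv.Perm (Fin k)) : eps (σ * τ) = eps σ * eps τ := by
  unfold eps
  rw [map_mul]
  push_cast
  ring

lemma eps_one {k : ℕ} : eps (1 : Equiv.Perm (Fin k)) = 1 := by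
  simp [eps]

lemma eps_cpm {k m j : ℕ} (hm : m < k) (hj : j ≤ m) :
    eps (cpm k m j) = (-1 : ℂ) ^ (m - j) := by
  unfold eps
  rw [cpm_sign hm hj]
  push_cast
  simp

lemma W_eq (q : Fin N → Fin N → ℂ) (h2 : ∀ a b, q a b * q b a = 1) (k : ℕ) :
    ∀ m : ℕ, m ≤ k → Wmat q k m = ∑ σ ∈ Fx k m, eps σ • T q σ := by
  intro m
  induction m with
  | zero =>
    intro _
    have hFx : Fx k 0 = {1} := by
      ext σ
      simp only [Fx, Finset.mem_filter, Finset.mem_univ, true_and, Finset.mem_singleton]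
      constructor
      · intro h
        ext i
        rw [h i (Nat.zero_le _)]
        rfl
      · intro h i _
        rw [h]
        rfl
    show (1 : Matrix _ _ ℂ) = _
    rw [hFx, Finset.sum_singleton, eps_one, T_one, one_smul]
  | succ m ih =>
    intro hm1
    have hm : m < k := hm1
    show Ical q k (m + 1) * Wmat q k m = _
    rw [Ical_eq q h2 k m, ih (le_of_lt hm), Finset.sum_mul_sum]
    have hsummand : ∀ j ∈ Finset.range (m + 1), ∀ σ ∈ Fx k m,
        (((-1 : ℂ)) ^ (m - j) • T q (cpm k m j)) * (eps σ • T q σ)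
          = eps (cpm k m j * σ) • T q (cpm k m j * σ) := by
      intro j hj σ _
      have hj' : j ≤ m := Nat.lt_succ_iff.mp (Finset.mem_range.mp hj)
      rw [smul_mul_assoc, mul_smul_comm, T_mul q h2, smul_smul,
        ← eps_cpm hm hj', ← eps_mul]
    rw [Finset.sum_congr rfl
      (fun j hj => Finset.sum_congr rfl (fun σ hσ => hsummand j hj σ hσ)),
      ← Finset.sum_product']
    refine Finset.sum_nbij' (fun p => cpm k m p.1 * p.2)
      (fun π => (((π ⟨m, hm⟩ : Fin k) : ℕ), (cpm k m ((π ⟨m, hm⟩ : Fin k) : ℕ))⁻¹ * π))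
      ?_ ?_ ?_ ?_ ?_
    · -- maps into Fx k (m+1)
      rintro ⟨j, σ⟩ hp
      rw [Finset.mem_product] at hp
      obtain ⟨hj, hσ⟩ := hp
      have hj' : j ≤ m := Nat.lt_succ_iff.mp (Finset.mem_range.mp hj)
      rw [mem_Fx] at hσ ⊢
      intro i hi
      rw [Equiv.Perm.mul_apply, hσ i (by omega), cpm_apply_out hm hj' i (by omega)]
    · -- inverse maps into product
      intro π hπ
      rw [mem_Fx] at hπ
      have hle : ((π ⟨m, hm⟩ : Fin k) : ℕ) ≤ m := by
        by_contra hc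
        push_neg at hc
        have h3 : π (π ⟨m, hm⟩) = π ⟨m, hm⟩ := hπ (π ⟨m, hm⟩) (by omega)
        have h4 : π ⟨m, hm⟩ = ⟨m, hm⟩ := π.injective h3
        rw [h4] at hc
        exact absurd hc (lt_irrefl m)
      refine Finset.mem_product.mpr ⟨Finset.mem_range.mpr (Nat.lt_succ_of_le hle), ?_⟩
      show (cpm k m ((π ⟨m, hm⟩ : Fin k) : ℕ))⁻¹ * π ∈ Fx k m
      rw [mem_Fx]
      intro i hi
      rw [Equiv.Perm.mul_apply]
      rcases eq_or_lt_of_le hi with hie | hie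
      · have hieq : i = ⟨m, hm⟩ := Fin.ext hie.symm
        subst hieq
        apply (cpm k m ((π ⟨m, hm⟩ : Fin k) : ℕ)).injective
        rw [Equiv.Perm.inv_def, Equiv.apply_symm_apply, cpm_apply_top hm hle]
      · rw [hπ i (by omega)]
        apply (cpm k m ((π ⟨m, hm⟩ : Fin k) : ℕ)).injective
        rw [Equiv.Perm.inv_def, Equiv.apply_symm_apply, cpm_apply_out hm hle i (by omega)]
    · -- left inverse
      rintro ⟨j, σ⟩ hp
      rw [Finset.mem_product] at hp
      obtain ⟨hj, hσ⟩ := hp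
      have hj' : j ≤ m := Nat.lt_succ_iff.mp (Finset.mem_range.mp hj)
      rw [mem_Fx] at hσ
      have hv : (cpm k m j * σ) ⟨m, hm⟩ = ⟨j, by omega⟩ := by
        rw [Equiv.Perm.mul_apply, hσ ⟨m, hm⟩ le_rfl, cpm_apply_top hm hj']
      show ((((cpm k m j * σ) ⟨m, hm⟩ : Fin k) : ℕ),
          (cpm k m (((cpm k m j * σ) ⟨m, hm⟩ : Fin k) : ℕ))⁻¹ * (cpm k m j * σ)) = (j, σ)
      rw [hv]
      refine Prod.ext rfl ?_
      show (cpm k m j)⁻¹ * (cpm k m j * σ) = σ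
      rw [inv_mul_cancel_left]
    · -- right inverse
      intro π _
      show cpm k m ((π ⟨m, hm⟩ : Fin k) : ℕ) * ((cpm k m ((π ⟨m, hm⟩ : Fin k) : ℕ))⁻¹ * π) = π
      rw [mul_inv_cancel_left]
    · intro p _
      rfl

lemma Fx_top (k : ℕ) : Fx k k = Finset.univ := by
  apply Finset.filter_true_of_mem
  intro σ _
  intro i hi
  exact absurd i.isLt (not_lt.mpr hi)


end WP

/-- the q-antisymmetrizer `W_{1...k}` on `(ℂ^N)^{⊗k}` satisfies
`W_{1...k} W_{1...k} = k! · W_{1...k}`. -/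
theorem Wmat_idem {N : ℕ} (q : Fin N → Fin N → ℂ)
    (h1 : ∀ a, q a a = 1)
    (h2 : ∀ a b, q a b * q b a = 1) :
    ∀ k : ℕ, Wmat q k k * Wmat q k k = (k.factorial : ℂ) • Wmat q k k := by
  intro k
  have hW : Wmat q k k = ∑ σ : Equiv.Perm (Fin k), WP.eps σ • WP.T q σ := by
    rw [WP.W_eq q h2 k k le_rfl, WP.Fx_top]
  rw [hW, Finset.sum_mul_sum]
  have hsum : ∀ σ : Equiv.Perm (Fin k),
      ∑ τ : Equiv.Perm (Fin k), (WP.eps σ • WP.T q σ) * (WP.eps τ • WP.T q τ)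
        = ∑ π : Equiv.Perm (Fin k), WP.eps π • WP.T q π := by
    intro σ
    refine Fintype.sum_equiv (Equiv.mulLeft σ) _ _ ?_
    intro τ
    rw [Equiv.coe_mulLeft]
    rw [smul_mul_assoc, mul_smul_comm, WP.T_mul q h2, smul_smul, ← WP.eps_mul]
  rw [Finset.sum_congr rfl (fun σ _ => hsum σ), Finset.sum_const]
  rw [← hW]
  have hcard : (Finset.univ : Finset (Equiv.Perm (Fin k))).card = k.factorial := by
    simp [Finset.card_univ, Fintype.card_perm, Fintype.card_fin]
  rw [hcard, ← Nat.cast_smul_eq_nsmul ℂ]
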